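/- The functional uniform prior density for the exponential model exp(−θx) on x ∈ [0,10], p(θ) ∝ e^{−10θ} √((e^{20θ} − 200θ² − 20θ − 1)/θ³), is integrable on (0,∞); that is, ∫₀^∞ e^{−10θ} √((e^{20θ} − 200θ² − 20θ − 1)/θ³) dθ < ∞. -/

import Mathlib

open MeasureTheory

lemma key_ineq {x : ℝ} (hx : 0 ≤ x) :
    Real.exp x - 1 - x - x ^ 2 / 2 ≤ x ^ 3 / 6 * Real.exp x := by
  set F : ℝ → ℝ := fun y => y ^ 3 / 6 - 1 + Real.exp (-y) * (1 + y + y ^ 2 / 2) with hF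
  have hderiv : ∀ y : ℝ, HasDerivAt F (y ^ 2 / 2 * (1 - Real.exp (-y))) y := by
    intro y
    have h1 : HasDerivAt (fun y : ℝ => y ^ 3 / 6 - 1) (3 * y ^ 2 / 6) y :=
      ((hasDerivAt_pow 3 y).div_const 6).sub_const 1
    have h2 : HasDerivAt (fun y : ℝ => Real.exp (-y)) (Real.exp (-y) * (-1)) y :=
      (hasDerivAt_neg y).exp
    have h3 : HasDerivAt (fun y : ℝ => 1 + y + y ^ 2 / 2) (1 + 2 * y / 2) y := by
      have := ((hasDerivAt_id y).const_add 1).add ((hasDerivAt_pow 2 y).div_const 2)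
      convert this using 1 <;> first | rfl | (push_cast; ring)
    have := h1.add (h2.mul h3)
    convert this using 1 <;> try rfl
    push_cast
    ring
  have hmono : MonotoneOn F (Set.Ici 0) := by
    apply monotoneOn_of_deriv_nonneg (convex_Ici 0)
    · exact fun y _ => ((hderiv y).continuousAt).continuousWithinAt
    · exact fun y _ => (hderiv y).differentiableAt.differentiableWithinAt
    · intro y hy
      rw [(hderiv y).deriv]
      rw [interior_Ici] at hy
      have h1 : Real.exp (-y) ≤ 1 := by
        rw [Real.exp_le_one_iff]; linarith [(show (0:ℝ) < y from hy).le]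
      have : (0:ℝ) ≤ y ^ 2 / 2 := by positivity
      nlinarith
  have hF0 : F 0 = 0 := by simp [hF]
  have hFx : 0 ≤ F x := by
    have := hmono (Set.mem_Ici.2 le_rfl) (Set.mem_Ici.2 hx) hx
    simpa [hF0] using this
  have hme : Real.exp (-x) * Real.exp x = 1 := by
    rw [← Real.exp_add]; simp
  simp only [hF] at hFx
  nlinarith [Real.exp_pos x]

lemma ratio_bound {θ : ℝ} (hθ : 0 < θ) :
    (Real.exp (20 * θ) - 200 * θ ^ 2 - 20 * θ - 1) / θ ^ 3 ≤
      4000 / 3 * Real.exp (20 * θ) := by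
  have h := key_ineq (x := 20 * θ) (by linarith)
  rw [div_le_iff₀ (by positivity)]
  nlinarith [Real.exp_pos (20 * θ)]

lemma g_meas : Measurable (fun θ : ℝ => Real.exp (-10 * θ) *
    Real.sqrt ((Real.exp (20 * θ) - 200 * θ ^ 2 - 20 * θ - 1) / θ ^ 3)) := by
  have m1 : Measurable fun θ : ℝ =>
      (Real.exp (20 * θ) - 200 * θ ^ 2 - 20 * θ - 1) / θ ^ 3 := by
    apply Measurable.div
    · exact (((Real.measurable_exp.comp (measurable_id.const_mul 20)).sub
        ((measurable_id.pow_const 2).const_mul 200)).sub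
        (measurable_id.const_mul 20)).sub measurable_const
    · exact measurable_id.pow_const 3
  exact (Real.measurable_exp.comp (measurable_id.const_mul (-10))).mul m1.sqrt

/-- The functional uniform prior density for the exponential model,
`g(θ) = e^{-10θ} √((e^{20θ} - 200θ² - 20θ - 1)/θ³)`, is integrable on `(0, ∞)`. -/
theorem expo_prior_integrable :
    IntegrableOn
      (fun θ : ℝ => Real.exp (-10 * θ) *
        Real.sqrt ((Real.exp (20 * θ) - 200 * θ ^ 2 - 20 * θ - 1) / θ ^ 3))
      (Set.Ioi (0:ℝ)) := by
  set g := fun θ : ℝ => Real.exp (-10 * θ) *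
    Real.sqrt ((Real.exp (20 * θ) - 200 * θ ^ 2 - 20 * θ - 1) / θ ^ 3) with hg
  have hsqrt_exp : ∀ θ : ℝ, Real.sqrt (Real.exp (20 * θ)) = Real.exp (10 * θ) := by
    intro θ
    have : Real.exp (20 * θ) = (Real.exp (10 * θ)) ^ 2 := by
      rw [← Real.exp_nat_mul]; ring_nf
    rw [this, Real.sqrt_sq (Real.exp_pos _).le]
  have h1 : IntegrableOn g (Set.Ioc 0 1) := by
    apply Integrable.mono' (g := fun _ : ℝ => Real.sqrt (4000 / 3))
    · exact integrableOn_const (by simp)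
    · exact g_meas.aestronglyMeasurable.restrict
    · filter_upwards [ae_restrict_mem measurableSet_Ioc] with θ hθ
      have hθ0 : 0 < θ := hθ.1
      have hb := ratio_bound hθ0
      rw [Real.norm_eq_abs, abs_of_nonneg (by positivity)]
      calc Real.exp (-10 * θ) *
            Real.sqrt ((Real.exp (20 * θ) - 200 * θ ^ 2 - 20 * θ - 1) / θ ^ 3)
          ≤ Real.exp (-10 * θ) * Real.sqrt (4000 / 3 * Real.exp (20 * θ)) := by
            exact mul_le_mul_of_nonneg_left (Real.sqrt_le_sqrt hb) (Real.exp_pos _).le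
        _ = Real.sqrt (4000 / 3) := by
            have he : Real.exp (-10 * θ) * Real.exp (10 * θ) = 1 := by
              rw [← Real.exp_add]; norm_num
            rw [Real.sqrt_mul (by norm_num), hsqrt_exp]
            calc Real.exp (-10 * θ) * (Real.sqrt (4000 / 3) * Real.exp (10 * θ))
                = Real.sqrt (4000 / 3) * (Real.exp (-10 * θ) * Real.exp (10 * θ)) := by ring
              _ = Real.sqrt (4000 / 3) := by rw [he, mul_one]
  have h2 : IntegrableOn g (Set.Ioi 1) := by
    apply Integrable.mono' (g := fun θ : ℝ => θ ^ (-(3:ℝ)/2))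
    · exact integrableOn_Ioi_rpow_of_lt (by norm_num) one_pos
    · exact g_meas.aestronglyMeasurable.restrict
    · filter_upwards [ae_restrict_mem measurableSet_Ioi] with θ hθ
      have hθ0 : (0:ℝ) < θ := lt_trans one_pos hθ
      have hnum : Real.exp (20 * θ) - 200 * θ ^ 2 - 20 * θ - 1 ≤ Real.exp (20 * θ) := by
        nlinarith
      have hb : (Real.exp (20 * θ) - 200 * θ ^ 2 - 20 * θ - 1) / θ ^ 3 ≤
          Real.exp (20 * θ) / θ ^ 3 :=
        div_le_div_of_nonneg_right hnum (by positivity) |>.trans_eq rfl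
      rw [Real.norm_eq_abs, abs_of_nonneg (by positivity)]
      have hsq3 : Real.sqrt (θ ^ 3) = θ ^ ((3:ℝ)/2) := by
        rw [Real.sqrt_eq_rpow, ← Real.rpow_natCast θ 3, ← Real.rpow_mul hθ0.le]
        norm_num
      calc Real.exp (-10 * θ) *
            Real.sqrt ((Real.exp (20 * θ) - 200 * θ ^ 2 - 20 * θ - 1) / θ ^ 3)
          ≤ Real.exp (-10 * θ) * Real.sqrt (Real.exp (20 * θ) / θ ^ 3) :=
            mul_le_mul_of_nonneg_left (Real.sqrt_le_sqrt hb) (Real.exp_pos _).le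
        _ = θ ^ (-(3:ℝ)/2) := by
            have he : Real.exp (-10 * θ) * Real.exp (10 * θ) = 1 := by
              rw [← Real.exp_add]; norm_num
            rw [Real.sqrt_div (Real.exp_pos _).le, hsqrt_exp, hsq3]
            rw [show (-(3:ℝ)/2) = -((3:ℝ)/2) by norm_num, Real.rpow_neg hθ0.le]
            field_simp
            rw [← Real.exp_add]
            simp
  have := h1.union h2
  rwa [Set.Ioc_union_Ioi_eq_Ioi zero_le_one] at this
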